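/- First isomorphism theorem for groupoids: Let Γ₁, Γ₂ be groupoids and F : Γ₁ → Γ₂ a full functor. Set H(x) := ker(F : Γ₁(x,x) → Γ₂(Fx,Fx)) for each object x. Then H = (H(x)) is a normal multilocular subgroup of Γ₁, and there is a unique functor F̄ : Γ₁/H → Γ₂ with F̄ ∘ 𝔭 = F, where 𝔭 is the canonical projection. Moreover F̄ is fully faithful. -/
import Mathlib

open CategoryTheory

def IsNormalMultilocular {Γ : Type*} [Groupoid Γ] (H : ∀ x : Γ, Set (x ⟶ x)) : Prop :=
  (∀ x : Γ, 𝟙 x ∈ H x) ∧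
  (∀ (x : Γ) (f g : x ⟶ x), f ∈ H x → g ∈ H x → f ≫ g ∈ H x) ∧
  (∀ (x : Γ) (f : x ⟶ x), f ∈ H x → Groupoid.inv f ∈ H x) ∧
  (∀ (x y : Γ) (g : x ⟶ y) (h : x ⟶ x), h ∈ H x → Groupoid.inv g ≫ h ≫ g ∈ H y)

def multHomRel {Γ : Type*} [Groupoid Γ] (H : ∀ x : Γ, Set (x ⟶ x)) : HomRel Γ :=
  fun {x _} f g => ∃ h ∈ H x, f = h ≫ g

/-- The objectwise kernel of a functor between groupoids. -/
def kerFam {Γ₁ Γ₂ : Type*} [Groupoid Γ₁] [Groupoid Γ₂] (F : Γ₁ ⥤ Γ₂) :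
    ∀ x : Γ₁, Set (x ⟶ x) :=
  fun x => {f : x ⟶ x | F.map f = 𝟙 (F.obj x)}

lemma kerFam_comp_eq {Γ₁ Γ₂ : Type*} [Groupoid Γ₁] [Groupoid Γ₂] (F : Γ₁ ⥤ Γ₂)
    (x y : Γ₁) (f₁ f₂ : x ⟶ y) (h : multHomRel (kerFam F) f₁ f₂) :
    F.map f₁ = F.map f₂ := by
  obtain ⟨h, hh, rfl⟩ := h
  simp only [kerFam, Set.mem_setOf_eq] at hh
  simp [F.map_comp, hh]

/-- First isomorphism theorem for groupoids: the kernels form a normal multilocular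
subgroup, `F` factors uniquely through the quotient, and the factorization is
fully faithful. -/
theorem groupoid_first_iso {Γ₁ Γ₂ : Type*} [Groupoid Γ₁] [Groupoid Γ₂]
    (F : Γ₁ ⥤ Γ₂) (hF : F.Full) :
    IsNormalMultilocular (kerFam F) ∧
    (∃! Fbar : CategoryTheory.Quotient (multHomRel (kerFam F)) ⥤ Γ₂,
        CategoryTheory.Quotient.functor (multHomRel (kerFam F)) ⋙ Fbar = F) ∧
    (∀ Fbar : CategoryTheory.Quotient (multHomRel (kerFam F)) ⥤ Γ₂,
        CategoryTheory.Quotient.functor (multHomRel (kerFam F)) ⋙ Fbar = F →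
        Fbar.Full ∧ Fbar.Faithful) := by
  refine ⟨⟨fun x => F.map_id x, ?_, ?_, ?_⟩, ?_, ?_⟩
  · intro x f g hf hg
    simp only [kerFam, Set.mem_setOf_eq] at hf hg ⊢
    simp [F.map_comp, hf, hg]
  · intro x f hf
    simp only [kerFam, Set.mem_setOf_eq] at hf ⊢
    rw [Groupoid.inv_eq_inv, F.map_inv]
    simp [hf]
  · intro x y g h hh
    simp only [kerFam, Set.mem_setOf_eq] at hh ⊢
    rw [F.map_comp, F.map_comp, hh, Groupoid.inv_eq_inv, F.map_inv]
    simp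
  · exact ⟨CategoryTheory.Quotient.lift _ F (kerFam_comp_eq F),
      CategoryTheory.Quotient.lift_spec _ F (kerFam_comp_eq F),
      fun Φ hΦ => CategoryTheory.Quotient.lift_unique _ F (kerFam_comp_eq F) Φ hΦ⟩
  · intro Fbar hFbar
    rw [CategoryTheory.Quotient.lift_unique _ F (kerFam_comp_eq F) Fbar hFbar]
    constructor
    · constructor
      intro X Y g
      obtain ⟨f, hf⟩ := hF.map_surjective (X := X.as) (Y := Y.as) g
      exact ⟨(Quotient.functor _).map f, hf⟩
    · constructor
      rintro ⟨x⟩ ⟨y⟩ f g hfg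
      induction f using Quot.ind
      induction g using Quot.ind
      rename_i f g
      apply CategoryTheory.Quotient.sound
      have hfg' : F.map f = F.map g := hfg
      refine ⟨f ≫ Groupoid.inv g, ?_, by simp⟩
      simp only [kerFam, Set.mem_setOf_eq, F.map_comp, hfg', Groupoid.inv_eq_inv, F.map_inv]
      simp
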